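/- Assume nf has right monotonicity and strong right transitivity. Let A ⊆ U, let δ be a limit ordinal, and let ⟨M_i : i < δ⟩ and ⟨N_i : i < δ⟩ be ≤-increasing chains of models (i < j < δ implies M_i ≤ M_j and N_i ≤ N_j). Assume: (a) A ⫫*_{M_i} N_i for every i < δ; and (b) for every ≤-increasing chain ⟨P_j : j < cf(δ)⟩ of members of K there exists j < cf(δ) with nf(P_j, A, ⋃_{j' < cf(δ)} P_{j'}). Then A ⫫*_{M_δ} N_δ, where M_δ := ⋃_{i<δ} M_i and N_δ := ⋃_{i<δ} N_i. -/

import Mathlib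

universe u

/-- `A ⫫*_C B`: there is a model `M₀ ∈ K` contained in `C` with `nf M₀ A B`. -/
def nfm {U : Type u} (K : Set (Set U)) (nf : Set U → Set U → Set U → Prop)
    (A C B : Set U) : Prop :=
  ∃ M₀ ∈ K, M₀ ⊆ C ∧ nf M₀ A B

/-- Proposition `cont-prop`: continuity of `⫫*` along chains, assuming chain
local character for chains of length `cf δ`. -/
theorem stmt_5 {U : Type u} (K : Set (Set U)) (nf : Set U → Set U → Set U → Prop)
    (le : Set U → Set U → Prop)
    (hle : ∀ M P : Set U, le M P → M ∈ K ∧ P ∈ K ∧ M ⊆ P)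
    (hrmono : ∀ M ∈ K, ∀ A B B₀ : Set U, nf M A B → B₀ ⊆ B → nf M A B₀)
    (htrans : ∀ M₀ ∈ K, ∀ M₁ ∈ K, ∀ A B : Set U, nf M₀ A M₁ → nf M₁ A B → nf M₀ A B)
    (A : Set U) (δ : Ordinal.{u}) (hδ : Order.IsSuccLimit δ)
    (M N : Ordinal.{u} → Set U)
    (hM : ∀ i j : Ordinal.{u}, i < j → j < δ → le (M i) (M j))
    (hN : ∀ i j : Ordinal.{u}, i < j → j < δ → le (N i) (N j))
    (ha : ∀ i < δ, nfm K nf A (M i) (N i))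
    (hb : ∀ P : Ordinal.{u} → Set U,
      (∀ j < δ.cof.ord, P j ∈ K) →
      (∀ i j : Ordinal.{u}, i < j → j < δ.cof.ord → le (P i) (P j)) →
      ∃ j < δ.cof.ord, nf (P j) A (⋃ j' < δ.cof.ord, P j')) :
    nfm K nf A (⋃ i < δ, M i) (⋃ i < δ, N i) := by
  obtain ⟨f, hf⟩ := Ordinal.exists_fundamental_sequence δ
  -- totalize the fundamental sequence
  set g : Ordinal.{u} → Ordinal.{u} := fun j => if h : j < δ.cof.ord then f j h else 0 with hg
  have hgval : ∀ j (h : j < δ.cof.ord), g j = f j h := by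
    intro j h; simp [hg, h]
  have hglt : ∀ j, j < δ.cof.ord → g j < δ := by
    intro j h
    rw [hgval j h, ← hf.blsub_eq]
    exact Ordinal.lt_blsub _ j h
  have hgmono : ∀ i j, i < j → j < δ.cof.ord → g i < g j := by
    intro i j hij hj
    rw [hgval i (hij.trans hj), hgval j hj]
    exact hf.strict_mono _ _ hij
  -- each N (g j) is a model
  have hNK : ∀ j, j < δ.cof.ord → N (g j) ∈ K := by
    intro j hj
    have h1 : g j < g j + 1 := lt_add_one _
    have h2 : g j + 1 < δ := hδ.succ_lt (hglt j hj)
    exact (hle _ _ (hN _ _ h1 h2)).1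
  -- the union over the cofinal subsequence is the whole union
  have hunion : (⋃ j' < δ.cof.ord, N (g j')) = ⋃ i < δ, N i := by
    apply Set.Subset.antisymm
    · refine Set.iUnion₂_subset fun j hj => ?_
      exact Set.subset_biUnion_of_mem (hglt j hj)
    · refine Set.iUnion₂_subset fun i hi => ?_
      rw [← hf.blsub_eq] at hi
      obtain ⟨j, hj, hij⟩ := Ordinal.lt_blsub_iff.1 hi
      have hij' : i ≤ f j hj := hij
      rcases hij'.lt_or_eq with h | h
      · have : N i ⊆ N (g j) := by
          rw [hgval j hj]
          exact (hle _ _ (hN i (f j hj) h ((hgval j hj ▸ hglt j hj)))).2.2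
        exact this.trans (Set.subset_iUnion₂ (s := fun j' (_ : j' < δ.cof.ord) => N (g j')) j hj)
      · rw [h, ← hgval j hj]
        exact Set.subset_iUnion₂ (s := fun j' (_ : j' < δ.cof.ord) => N (g j')) j hj
  -- apply chain local character to the chain N ∘ g
  obtain ⟨j, hj, hnfj⟩ := hb (fun j => N (g j)) hNK
    (fun i j hij hj => hN _ _ (hgmono i j hij hj) (hglt j hj))
  rw [hunion] at hnfj
  -- combine with (a) at index g j
  obtain ⟨M₀, hM₀K, hM₀sub, hM₀nf⟩ := ha (g j) (hglt j hj)
  refine ⟨M₀, hM₀K, hM₀sub.trans (Set.subset_biUnion_of_mem (hglt j hj)), ?_⟩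
  exact htrans M₀ hM₀K (N (g j)) (hNK j hj) A _ hM₀nf hnfj
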